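/- A risk measure ρ : 𝒳 → ℝ is star-shaped if and only if there exists a collection Γ of convex risk measures on 𝒳 such that ρ(X) = min_{γ∈Γ} γ(X) for every X ∈ 𝒳 (the minimum being attained for each X). Moreover, in this case Γ can be chosen as the collection of all convex risk measures γ satisfying γ(Y) ≥ ρ(Y) for all Y ∈ 𝒳; that is, ρ is star-shaped if and only if for every X ∈ 𝒳 there exists a convex risk measure γ with γ ≥ ρ pointwise and γ(X) = ρ(X). -/
import Mathlib

open BoundedContinuousFunction

def IsRiskMeasure {Ω : Type*} [TopologicalSpace Ω] (ρ : (Ω →ᵇ ℝ) → ℝ) : Prop :=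
  (∀ X Y : Ω →ᵇ ℝ, Y ≤ X → ρ Y ≤ ρ X) ∧
  (∀ (X : Ω →ᵇ ℝ) (m : ℝ), ρ (X - const Ω m) = ρ X - m) ∧
  ρ 0 = 0

def IsStarShaped {Ω : Type*} [TopologicalSpace Ω] (ρ : (Ω →ᵇ ℝ) → ℝ) : Prop :=
  ∀ (X : Ω →ᵇ ℝ) (l : ℝ), 1 < l → l * ρ X ≤ ρ (l • X)

def IsConvex {Ω : Type*} [TopologicalSpace Ω] (ρ : (Ω →ᵇ ℝ) → ℝ) : Prop :=
  ∀ (X Y : Ω →ᵇ ℝ) (t : ℝ), t ∈ Set.Icc (0 : ℝ) 1 →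
    ρ (t • X + (1 - t) • Y) ≤ t * ρ X + (1 - t) * ρ Y

/-- auxiliary: pointwise sup of a bounded function -/
noncomputable def supF {Ω : Type*} [TopologicalSpace Ω] (X : Ω →ᵇ ℝ) : ℝ := ⨆ ω, X ω

lemma bddAbove_range' {Ω : Type*} [TopologicalSpace Ω] (X : Ω →ᵇ ℝ) :
    BddAbove (Set.range fun ω => X ω) := by
  refine ⟨‖X‖, ?_⟩
  rintro _ ⟨ω, rfl⟩
  exact le_trans (le_abs_self _) (X.norm_coe_le_norm ω)

lemma supF_le {Ω : Type*} [TopologicalSpace Ω] [Nonempty Ω] {X : Ω →ᵇ ℝ} {c : ℝ}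
    (h : ∀ ω, X ω ≤ c) : supF X ≤ c := ciSup_le h

lemma le_supF {Ω : Type*} [TopologicalSpace Ω] (X : Ω →ᵇ ℝ) (ω : Ω) : X ω ≤ supF X :=
  le_ciSup (bddAbove_range' X) ω

lemma ciInf_sub_const' {ι : Sort*} [Nonempty ι] (f : ι → ℝ) (c : ℝ)
    (hb : BddBelow (Set.range f)) : (⨅ i, (f i - c)) = (⨅ i, f i) - c := by
  apply le_antisymm
  · rw [le_sub_iff_add_le]
    refine le_ciInf fun i => ?_
    have hb' : BddBelow (Set.range fun i => f i - c) := by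
      obtain ⟨b, hb⟩ := hb
      exact ⟨b - c, by rintro _ ⟨i, rfl⟩; exact sub_le_sub_right (hb ⟨i, rfl⟩) c⟩
    have := ciInf_le hb' i
    linarith
  · exact le_ciInf fun i => sub_le_sub_right (ciInf_le hb i) c

lemma supF_const {Ω : Type*} [TopologicalSpace Ω] [Nonempty Ω] (m : ℝ) :
    supF (const Ω m) = m := by
  simp [supF]

lemma key_pointwise {Ω : Type*} [TopologicalSpace Ω] [Nonempty Ω]
    (ρ : (Ω →ᵇ ℝ) → ℝ) (hρ : IsRiskMeasure ρ) (hs : IsStarShaped ρ) (X : Ω →ᵇ ℝ) :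
    ∃ γ : (Ω →ᵇ ℝ) → ℝ,
      IsRiskMeasure γ ∧ IsConvex γ ∧ (∀ Y : Ω →ᵇ ℝ, ρ Y ≤ γ Y) ∧ γ X = ρ X := by
  obtain ⟨hmono, htrans, hnorm⟩ := hρ
  haveI : Nonempty (Set.Icc (0:ℝ) 1) := ⟨⟨0, by norm_num⟩⟩
  set Z : Ω →ᵇ ℝ := X - const Ω (ρ X) with hZdef
  have hZ : ρ Z = 0 := by rw [hZdef, htrans]; ring
  -- ρ (l • Z) ≤ 0 for l ∈ [0,1]
  have hρl : ∀ l : ℝ, 0 ≤ l → l ≤ 1 → ρ (l • Z) ≤ 0 := by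
    intro l hl0 hl1
    rcases eq_or_lt_of_le hl0 with h0 | h0
    · simp [← h0, hnorm]
    rcases eq_or_lt_of_le hl1 with h1 | h1
    · simp [h1, hZ]
    have hinv : 1 < 1 / l := by
      rw [lt_div_iff₀ h0]; linarith
    have := hs (l • Z) (1 / l) hinv
    rw [smul_smul, one_div_mul_cancel (ne_of_gt h0), one_smul, hZ] at this
    nlinarith
  set γ : (Ω →ᵇ ℝ) → ℝ := fun Y => ⨅ l : Set.Icc (0:ℝ) 1, supF (Y - (l : ℝ) • Z) with hγdef
  -- key : ρ Y ≤ supF (Y - l • Z)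
  have hkey : ∀ (Y : Ω →ᵇ ℝ) (l : Set.Icc (0:ℝ) 1), ρ Y ≤ supF (Y - (l : ℝ) • Z) := by
    intro Y l
    set m := supF (Y - (l : ℝ) • Z) with hm
    have hle : Y ≤ (l : ℝ) • Z + const Ω m := by
      intro ω
      show Y ω ≤ ((l : ℝ) • Z + const Ω m) ω
      have := le_supF (Y - (l : ℝ) • Z) ω
      simp only [coe_sub, Pi.sub_apply, coe_smul, Pi.smul_apply, smul_eq_mul] at this
      simp only [coe_add, Pi.add_apply, coe_smul, Pi.smul_apply, smul_eq_mul, const_apply]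
      linarith
    have h1 : ρ Y ≤ ρ ((l : ℝ) • Z + const Ω m) := hmono _ _ hle
    have h2 : (l : ℝ) • Z + const Ω m = (l : ℝ) • Z - const Ω (-m) := by
      ext ω; simp
    rw [h2, htrans] at h1
    have := hρl l l.2.1 l.2.2
    linarith
  have hbdd : ∀ Y : Ω →ᵇ ℝ,
      BddBelow (Set.range fun l : Set.Icc (0:ℝ) 1 => supF (Y - (l : ℝ) • Z)) := by
    intro Y
    exact ⟨ρ Y, by rintro _ ⟨l, rfl⟩; exact hkey Y l⟩
  have hge : ∀ Y : Ω →ᵇ ℝ, ρ Y ≤ γ Y := fun Y => le_ciInf (hkey Y)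
  have hγle : ∀ (Y : Ω →ᵇ ℝ) (l : Set.Icc (0:ℝ) 1), γ Y ≤ supF (Y - (l : ℝ) • Z) :=
    fun Y l => ciInf_le (hbdd Y) l
  refine ⟨γ, ⟨?_, ?_, ?_⟩, ?_, ?_, ?_⟩
  · -- monotone
    intro A B hBA
    refine ciInf_mono (hbdd B) fun l => ?_
    refine supF_le fun ω => ?_
    have h1 := le_supF (A - (l : ℝ) • Z) ω
    have h2 : B ω ≤ A ω := hBA ω
    simp only [coe_sub, Pi.sub_apply, coe_smul, Pi.smul_apply, smul_eq_mul] at h1 ⊢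
    linarith
  · -- translation
    intro Y m
    have hsub : ∀ l : Set.Icc (0:ℝ) 1,
        supF (Y - const Ω m - (l : ℝ) • Z) = supF (Y - (l : ℝ) • Z) - m := by
      intro l
      have heq : Y - const Ω m - (l : ℝ) • Z = (Y - (l : ℝ) • Z) - const Ω m := by
        ext ω; simp; ring
      rw [heq]
      apply le_antisymm
      · refine supF_le fun ω => ?_
        have := le_supF (Y - (l : ℝ) • Z) ω
        simp only [coe_sub, Pi.sub_apply, coe_smul, Pi.smul_apply, smul_eq_mul,
          const_apply] at this ⊢
        linarith
      · rw [sub_le_iff_le_add]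
        refine supF_le fun ω => ?_
        have := le_supF (Y - (l : ℝ) • Z - const Ω m) ω
        simp only [coe_sub, Pi.sub_apply, coe_smul, Pi.smul_apply, smul_eq_mul,
          const_apply] at this ⊢
        linarith
    show (⨅ l : Set.Icc (0:ℝ) 1, supF (Y - const Ω m - (l : ℝ) • Z)) = γ Y - m
    rw [iInf_congr hsub, ciInf_sub_const' _ _ (hbdd Y)]
  · -- normalization
    apply le_antisymm
    · have h := hγle 0 ⟨0, by norm_num⟩
      have h0 : (0:Ω →ᵇ ℝ) - (0:ℝ) • Z = const Ω 0 := by ext ω; simp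
      rw [h0, supF_const] at h
      exact h
    · have := hge 0; rwa [hnorm] at this
  · -- convexity
    intro A B t ht
    obtain ⟨ht0, ht1⟩ := ht
    refine le_of_forall_pos_le_add fun ε hε => ?_
    obtain ⟨l₁, hl₁⟩ : ∃ l : Set.Icc (0:ℝ) 1, supF (A - (l : ℝ) • Z) < γ A + ε :=
      exists_lt_of_ciInf_lt (lt_add_of_pos_right _ hε)
    obtain ⟨l₂, hl₂⟩ : ∃ l : Set.Icc (0:ℝ) 1, supF (B - (l : ℝ) • Z) < γ B + ε :=
      exists_lt_of_ciInf_lt (lt_add_of_pos_right _ hε)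
    have hl₁m := l₁.2; have hl₂m := l₂.2
    simp only [Set.mem_Icc] at hl₁m hl₂m
    set l : ℝ := t * l₁ + (1 - t) * l₂ with hl
    have hlmem : l ∈ Set.Icc (0:ℝ) 1 := by
      constructor
      · nlinarith [hl₁m.1, hl₂m.1]
      · nlinarith [hl₁m.2, hl₂m.2]
    have heq : t • A + (1 - t) • B - l • Z
        = t • (A - (l₁ : ℝ) • Z) + (1 - t) • (B - (l₂ : ℝ) • Z) := by
      ext ω; simp; ring
    have h1 : γ (t • A + (1 - t) • B) ≤ supF (t • A + (1 - t) • B - l • Z) :=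
      hγle _ ⟨l, hlmem⟩
    rw [heq] at h1
    have h2 : supF (t • (A - (l₁ : ℝ) • Z) + (1 - t) • (B - (l₂ : ℝ) • Z))
        ≤ t * supF (A - (l₁ : ℝ) • Z) + (1 - t) * supF (B - (l₂ : ℝ) • Z) := by
      refine supF_le fun ω => ?_
      have hA := le_supF (A - (l₁ : ℝ) • Z) ω
      have hB := le_supF (B - (l₂ : ℝ) • Z) ω
      simp only [coe_add, Pi.add_apply, coe_smul, Pi.smul_apply, smul_eq_mul]
      nlinarith
    nlinarith
  · -- γ ≥ ρ
    exact hge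
  · -- γ X = ρ X
    apply le_antisymm
    · have := hγle X ⟨1, by norm_num⟩
      have heq : X - (1:ℝ) • Z = const Ω (ρ X) := by
        rw [hZdef]; ext ω; simp
      rw [heq, supF_const] at this
      exact this
    · exact hge X


lemma star_of_pointwise {Ω : Type*} [TopologicalSpace Ω]
    (ρ : (Ω →ᵇ ℝ) → ℝ)
    (h : ∀ X : Ω →ᵇ ℝ, ∃ γ : (Ω →ᵇ ℝ) → ℝ,
      IsRiskMeasure γ ∧ IsConvex γ ∧ (∀ Y : Ω →ᵇ ℝ, ρ Y ≤ γ Y) ∧ γ X = ρ X) :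
    IsStarShaped ρ := by
  intro X l hl
  obtain ⟨γ, ⟨_, _, hγ0⟩, hconv, hge, heq⟩ := h (l • X)
  have hlpos : (0:ℝ) < l := by linarith
  have hmem : (1 / l) ∈ Set.Icc (0:ℝ) 1 := by
    constructor
    · positivity
    · rw [div_le_one hlpos]; linarith
  have hc := hconv (l • X) 0 (1 / l) hmem
  have harg : (1 / l) • (l • X) + (1 - 1 / l) • (0 : Ω →ᵇ ℝ) = X := by
    rw [smul_smul, one_div_mul_cancel (ne_of_gt hlpos), one_smul, smul_zero, add_zero]
  rw [harg, hγ0, mul_zero, add_zero, heq] at hc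
  have h1 : l * γ X ≤ ρ (l • X) := by
    rw [div_mul_eq_mul_div, le_div_iff₀ hlpos, mul_comm] at hc
    linarith
  have h2 : ρ X ≤ γ X := hge X
  nlinarith

theorem star_shaped_iff_min_of_convex
    {Ω : Type*} [TopologicalSpace Ω] [DiscreteTopology Ω] [Nonempty Ω]
    (ρ : (Ω →ᵇ ℝ) → ℝ) (hρ : IsRiskMeasure ρ) :
    (IsStarShaped ρ ↔
      ∃ Γ : Set ((Ω →ᵇ ℝ) → ℝ),
        (∀ γ ∈ Γ, IsRiskMeasure γ ∧ IsConvex γ) ∧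
        ∀ X : Ω →ᵇ ℝ, IsLeast {y : ℝ | ∃ γ ∈ Γ, y = γ X} (ρ X)) ∧
    (IsStarShaped ρ ↔
      ∀ X : Ω →ᵇ ℝ, ∃ γ : (Ω →ᵇ ℝ) → ℝ,
        IsRiskMeasure γ ∧ IsConvex γ ∧ (∀ Y : Ω →ᵇ ℝ, ρ Y ≤ γ Y) ∧ γ X = ρ X) := by
  have key : IsStarShaped ρ ↔
      ∀ X : Ω →ᵇ ℝ, ∃ γ : (Ω →ᵇ ℝ) → ℝ,
        IsRiskMeasure γ ∧ IsConvex γ ∧ (∀ Y : Ω →ᵇ ℝ, ρ Y ≤ γ Y) ∧ γ X = ρ X :=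
    ⟨fun hs => key_pointwise ρ hρ hs, star_of_pointwise ρ⟩
  refine ⟨?_, key⟩
  rw [key]
  constructor
  · intro h
    refine ⟨{γ | IsRiskMeasure γ ∧ IsConvex γ ∧ ∀ Y : Ω →ᵇ ℝ, ρ Y ≤ γ Y},
      fun γ hγ => ⟨hγ.1, hγ.2.1⟩, fun X => ?_⟩
    obtain ⟨γ, h1, h2, h3, h4⟩ := h X
    constructor
    · exact ⟨γ, ⟨h1, h2, h3⟩, h4.symm⟩
    · rintro y ⟨γ', hγ', rfl⟩
      exact hγ'.2.2 X
  · rintro ⟨Γ, hΓ, hleast⟩ X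
    obtain ⟨⟨γ, hγΓ, hγX⟩, -⟩ := hleast X
    refine ⟨γ, (hΓ γ hγΓ).1, (hΓ γ hγΓ).2, fun Y => ?_, hγX.symm⟩
    exact (hleast Y).2 ⟨γ, hγΓ, rfl⟩
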